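/- arXiv:1808.01906 — 5 statements merged into one kernel-verified Lean document; each statement's English description precedes it below -/
import Mathlib

section
/- Let G = (N, E) be a finite directed graph with distinguished sink subset V, each vertex having unit demand, and let f : E → ℝ≥0 be a confluent flow (satisfying out(n) = 1 + in(n) at every non-sink n, with at most one outgoing edge of positive flow per vertex). Then the subgraph obtained by deleting all edges with zero flow is acyclic, its sinks are exactly V, and every vertex not in V has outdegree exactly one. -/
/-- If f is a confluent flow with unit demand on a finite directed graph (N, E) with
distinguished sink subset V, then the subgraph of positive-flow edges is acyclic, its
sinks are exactly V, and every vertex outside V has outdegree exactly one. -/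
theorem stmt_2 {N : Type*} [Fintype N] (E : N → N → Prop) (V : Set N) (f : N → N → ℝ)
    (hVsink : ∀ v ∈ V, ∀ m, ¬ E v m)
    (hsupp : ∀ a b, ¬ E a b → f a b = 0)
    (hnonneg : ∀ a b, 0 ≤ f a b)
    (hcons : ∀ n, n ∉ V → (∑ m, f n m) = 1 + ∑ m, f m n)
    (hconf : ∀ n m m', 0 < f n m → 0 < f n m' → m = m') :
    (∀ n, ¬ Relation.TransGen (fun a b => 0 < f a b) n n) ∧
    (∀ n, ((∀ m, ¬ (0 < f n m)) ↔ n ∈ V)) ∧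
    (∀ n, n ∉ V → ∃! m, 0 < f n m) := by
  have hnotV : ∀ n m, 0 < f n m → n ∉ V := by
    intro n m h hn
    rw [hsupp n m (hVsink n hn m)] at h
    exact lt_irrefl 0 h
  have hsum : ∀ n m, 0 < f n m → (∑ k, f n k) = f n m := by
    intro n m h
    apply Finset.sum_eq_single_of_mem m (Finset.mem_univ m)
    intro k _ hk
    by_contra hne
    exact hk (hconf n k m ((hnonneg n k).lt_of_ne (Ne.symm hne)) h)
  have hval : ∀ n m, 0 < f n m → f n m = 1 + ∑ k, f k n := by
    intro n m h
    rw [← hsum n m h]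
    exact hcons n (hnotV n m h)
  have hge : ∀ c n m, 0 < f c n → 0 < f n m → f c n + 1 ≤ f n m := by
    intro c n m hc h
    have h1 : f c n ≤ ∑ k, f k n :=
      Finset.single_le_sum (fun k _ => hnonneg k n) (Finset.mem_univ c)
    rw [hval n m h]
    linarith
  have L : ∀ a b, Relation.TransGen (fun a b => 0 < f a b) a b →
      ∃ c, 0 < f c b ∧ ∀ x, 0 < f a x → f a x ≤ f c b := by
    intro a b h
    induction h with
    | single hab => exact ⟨a, hab, fun x hx => le_of_eq (by rw [hconf a x _ hx hab])⟩
    | @tail b c hab hbc ih =>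
        obtain ⟨d, hd, hle⟩ := ih
        refine ⟨b, hbc, fun x hx => ?_⟩
        have := hge d b c hd hbc
        have := hle x hx
        linarith
  have hexists : ∀ n, n ∉ V → ∃ m, 0 < f n m := by
    intro n hn
    by_contra hno
    push_neg at hno
    have hz : (∑ m, f n m) = 0 := Finset.sum_eq_zero fun m _ =>
      le_antisymm (hno m) (hnonneg n m)
    have h1 : (0:ℝ) ≤ ∑ m, f m n :=
      Finset.sum_nonneg fun m _ => hnonneg m n
    have := hcons n hn
    linarith
  refine ⟨?_, ?_, ?_⟩
  · intro n h
    obtain ⟨c, hc, hle⟩ := L n n h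
    obtain ⟨x, hx, -⟩ := (Relation.TransGen.head'_iff).mp h
    have := hle x hx
    have := hge c n x hc hx
    linarith
  · intro n
    constructor
    · intro h
      by_contra hn
      obtain ⟨m, hm⟩ := hexists n hn
      exact h m hm
    · intro hn m hm
      rw [hsupp n m (hVsink n hn m)] at hm
      exact lt_irrefl 0 hm
  · intro n hn
    obtain ⟨m, hm⟩ := hexists n hn
    exact ⟨m, hm, fun y hy => hconf n y m hy hm⟩
end

section
/- Let f be a confluent flow with unit demand on a finite directed graph. Then the subgraph of positive-flow edges contains no directed cycle. -/
/-- The positive-flow edges of a confluent flow with unit demand on a finite directed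
graph contain no directed cycle. -/
theorem stmt_3 {N : Type*} [Fintype N] (E : N → N → Prop) (V : Set N) (f : N → N → ℝ)
    (hVsink : ∀ v ∈ V, ∀ m, ¬ E v m)
    (hsupp : ∀ a b, ¬ E a b → f a b = 0)
    (hnonneg : ∀ a b, 0 ≤ f a b)
    (hcons : ∀ n, n ∉ V → (∑ m, f n m) = 1 + ∑ m, f m n)
    (hconf : ∀ n m m', 0 < f n m → 0 < f n m' → m = m') :
    ∀ n, ¬ Relation.TransGen (fun a b => 0 < f a b) n n := by
  -- outflow of a vertex with a positive out-edge equals that edge's flow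
  have gsum : ∀ a b, 0 < f a b → (∑ m, f a m) = f a b := by
    intro a b hab
    refine Finset.sum_eq_single b ?_ ?_
    · intro m' _ hm'
      by_contra h
      exact hm' (hconf a m' b (lt_of_le_of_ne (hnonneg a m') (Ne.symm h)) hab)
    · intro h; exact absurd (Finset.mem_univ b) h
  -- strict increase of outflow along consecutive positive edges
  have step : ∀ a b c, 0 < f a b → 0 < f b c → (∑ m, f a m) + 1 ≤ (∑ m, f b m) := by
    intro a b c hab hbc
    have hbV : b ∉ V := by
      intro hb
      have : f b c = 0 := hsupp b c (hVsink b hb c)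
      linarith
    have hcb := hcons b hbV
    have hle : f a b ≤ ∑ m, f m b :=
      Finset.single_le_sum (fun m _ => hnonneg m b) (Finset.mem_univ a)
    rw [gsum a b hab]
    linarith
  intro n hn
  -- claim: along any transgen path ending with a vertex having a further out-edge,
  -- outflow strictly increases
  have claim : ∀ a b, Relation.TransGen (fun a b => 0 < f a b) a b →
      ∀ c, 0 < f b c → (∑ m, f a m) + 1 ≤ (∑ m, f b m) := by
    intro a b h
    induction h with
    | single hab => intro c hc; exact step _ _ _ hab hc
    | tail hab hbc ih =>
      intro d hd
      have h1 := ih _ hbc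
      have h2 := step _ _ _ hbc hd
      linarith
  cases hn with
  | single h =>
    have := claim n n (Relation.TransGen.single h) n h
    linarith
  | @tail b c hnb hbn =>
    have hbb : Relation.TransGen (fun a b => 0 < f a b) b b :=
      Relation.TransGen.head hbn hnb
    have := claim _ _ hbb _ hbn
    linarith
end

section
/- Let (N, E') be a delegation graph with voter set V, and define the weight w(n) of each node recursively by w(n) = 1 + Σ_{(m,n)∈E'} w(m). If E' ⊆ E and we define f on E by f(e) = w(n) when e is the unique outgoing edge of a non-voter n in E', and f(e) = 0 otherwise, then f is a confluent flow with unit demand on (N, E). -/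
open scoped Classical in
/-- Given a delegation graph (N, E') with voter set V contained in a graph (N, E), and
the recursively defined weights w(n) = 1 + Σ_{(m,n) ∈ E'} w(m), the function sending the
unique outgoing edge of each non-voter n to w(n) (and all other edges to 0) is a
confluent flow with unit demand on (N, E). -/
theorem stmt_4 {N : Type*} [Fintype N] (E E' : N → N → Prop) (V : Set N) (w : N → ℝ)
    (hVsink : ∀ v ∈ V, ∀ m, ¬ E v m)
    (hsub : ∀ a b, E' a b → E a b)
    (hacyc : ∀ n, ¬ Relation.TransGen E' n n)
    (hsinks : ∀ n, ((∀ m, ¬ E' n m) ↔ n ∈ V))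
    (houtdeg : ∀ n, n ∉ V → ∃! m, E' n m)
    (hw : ∀ n, w n = 1 + ∑ m, if E' m n then w m else 0)
    (f : N → N → ℝ)
    (hf : ∀ a b, f a b = if E' a b then w a else 0) :
    (∀ a b, ¬ E a b → f a b = 0) ∧
    (∀ a b, 0 ≤ f a b) ∧
    (∀ n, n ∉ V → (∑ m, f n m) = 1 + ∑ m, f m n) ∧
    (∀ n m m', 0 < f n m → 0 < f n m' → m = m') := by
  have hwf : WellFounded E' := by
    have htg : WellFounded (Relation.TransGen E') := by
      have : IsIrrefl N (Relation.TransGen E') := ⟨hacyc⟩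
      have : IsTrans N (Relation.TransGen E') := ⟨fun _ _ _ => Relation.TransGen.trans⟩
      exact Finite.wellFounded_of_trans_of_irrefl _
    exact Subrelation.wf (fun h => Relation.TransGen.single h) htg
  have hwpos : ∀ n, 0 < w n := by
    intro n
    induction n using hwf.induction with
    | _ n ih =>
      rw [hw n]
      have : (0:ℝ) ≤ ∑ m, if E' m n then w m else 0 := by
        apply Finset.sum_nonneg
        intro m _
        split
        · exact le_of_lt (ih m (by assumption))
        · exact le_refl 0
      linarith
  refine ⟨?_, ?_, ?_, ?_⟩
  · intro a b hab
    rw [hf]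
    split
    · exact absurd (hsub a b (by assumption)) hab
    · rfl
  · intro a b
    rw [hf]
    split
    · exact le_of_lt (hwpos a)
    · rfl
  · intro n hn
    obtain ⟨m, hm, hmu⟩ := houtdeg n hn
    have h1 : (∑ k, f n k) = w n := by
      have : ∀ k, f n k = if k = m then w n else 0 := by
        intro k
        rw [hf]
        by_cases hk : E' n k
        · rw [if_pos hk, if_pos (hmu k hk)]
        · rw [if_neg hk, if_neg (fun h => hk (by rw [h]; exact hm))]
      rw [Finset.sum_congr rfl (fun k _ => this k), Finset.sum_ite_eq' Finset.univ m,
        if_pos (Finset.mem_univ m)]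
    have h2 : (∑ k, f k n) = w n - 1 := by
      have := hw n
      rw [Finset.sum_congr rfl (fun k _ => hf k n)]
      linarith
    rw [h1, h2]; ring
  · intro n m m' h1 h2
    rw [hf] at h1 h2
    have e1 : E' n m := by by_contra h; rw [if_neg h] at h1; exact lt_irrefl 0 h1
    have e2 : E' n m' := by by_contra h; rw [if_neg h] at h2; exact lt_irrefl 0 h2
    have hn : n ∉ V := fun hv => (hsinks n).mpr hv m e1
    obtain ⟨k, hk, hku⟩ := houtdeg n hn
    rw [hku m e1, hku m' e2]
end

section
/- Let (α_k) be the sequence defined by α_1 = 1 and, for k > 1, α_k the unique root in (0, α_{k−1}) of d·x² + k·d·(α_{k−1}² − x²) − x = 0, with d ∈ (0,1). Then α_k → 0 as k → ∞. -/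
open Filter in
/-- With α₁ = 1 and, for k > 1, α_k the unique root in (0, α_{k-1}) of
d x² + k d (α_{k-1}² − x²) − x = 0 (for d ∈ (0,1)), one has α_k → 0 as k → ∞. -/
theorem stmt_12 (d : ℝ) (hd : d ∈ Set.Ioo (0 : ℝ) 1) (α : ℕ → ℝ)
    (h1 : α 1 = 1)
    (hroot : ∀ k : ℕ, 2 ≤ k → α k ∈ Set.Ioo 0 (α (k - 1)) ∧
      d * (α k) ^ 2 + (k : ℝ) * d * ((α (k - 1)) ^ 2 - (α k) ^ 2) - α k = 0) :
    Tendsto α atTop (nhds 0) := by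
  obtain ⟨hd0, hd1⟩ := hd
  have hstep : ∀ k : ℕ, 1 ≤ k → α (k + 1) < α k := by
    intro k hk
    have h := (hroot (k + 1) (by omega)).1
    simpa using h.2
  have hpos : ∀ k : ℕ, 1 ≤ k → 0 < α k := by
    intro k hk
    rcases Nat.lt_or_ge k 2 with h | h
    · interval_cases k <;> simp [h1]
    · exact (hroot k h).1.1
  have hanti : ∀ m n : ℕ, 1 ≤ m → m ≤ n → α n ≤ α m := by
    intro m n hm hmn
    induction n with
    | zero => omega
    | succ n ih =>
      rcases Nat.lt_or_ge m (n + 1) with h | h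
      · exact le_trans (hstep n (by omega)).le (ih (by omega))
      · have : m = n + 1 := by omega
        simp [this]
  have hle1 : ∀ k : ℕ, 1 ≤ k → α k ≤ 1 := by
    intro k hk
    simpa [h1] using hanti 1 k le_rfl hk
  -- main claim: values get arbitrarily small
  have key : ∀ ε : ℝ, 0 < ε → ∃ k : ℕ, 1 ≤ k ∧ α k < ε := by
    intro ε hε
    by_contra hcon
    push_neg at hcon
    set c : ℝ := ε * (1 - d) / d with hc
    have hc0 : 0 < c := by
      apply div_pos _ hd0
      nlinarith
    -- key inequality for k = i+2
    have hineq : ∀ i : ℕ, c * (1 / ((i : ℝ) + 2)) ≤ α (i + 1) ^ 2 - α (i + 2) ^ 2 := by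
      intro i
      have heq := (hroot (i + 2) (by omega)).2
      have hcast : ((i + 2 : ℕ) : ℝ) = (i : ℝ) + 2 := by push_cast; ring
      have hsub : (i + 2) - 1 = i + 1 := by omega
      rw [hsub, hcast] at heq
      have hk2 : α (i + 2) ≤ 1 := hle1 _ (by omega)
      have hεk : ε ≤ α (i + 2) := hcon _ (by omega)
      have hkp := hpos (i + 2) (by omega)
      have h1d : 1 - d ≤ 1 - d * α (i + 2) := by nlinarith
      have hlow : ε * (1 - d) ≤ ((i : ℝ) + 2) * d * (α (i + 1) ^ 2 - α (i + 2) ^ 2) := by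
        have hm : ε * (1 - d) ≤ α (i + 2) * (1 - d * α (i + 2)) :=
          mul_le_mul hεk h1d (by linarith) hkp.le
        nlinarith
      have hpos' : (0 : ℝ) < d * ((i : ℝ) + 2) := by positivity
      have hval : c * (1 / ((i : ℝ) + 2)) * (d * ((i : ℝ) + 2)) = ε * (1 - d) := by
        rw [hc]; field_simp
      have h2 : c * (1 / ((i : ℝ) + 2)) * (d * ((i : ℝ) + 2)) ≤
          (α (i + 1) ^ 2 - α (i + 2) ^ 2) * (d * ((i : ℝ) + 2)) := by
        rw [hval]; nlinarith [hlow]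
      exact le_of_mul_le_mul_right h2 hpos'
    -- sums are bounded
    have hbound : ∀ n : ℕ, ∑ i ∈ Finset.range n, (1 / ((i : ℝ) + 1)) ≤ 1 + 1 / c := by
      intro n
      cases n with
      | zero => simp; positivity
      | succ n =>
        have htel : ∑ i ∈ Finset.range n, (α (i + 1) ^ 2 - α (i + 2) ^ 2) =
            α 1 ^ 2 - α (n + 1) ^ 2 := by
          exact Finset.sum_range_sub' (fun i => α (i + 1) ^ 2) n
        have hsum1 : ∑ i ∈ Finset.range n, c * (1 / ((i : ℝ) + 2)) ≤ 1 := by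
          calc ∑ i ∈ Finset.range n, c * (1 / ((i : ℝ) + 2))
              ≤ ∑ i ∈ Finset.range n, (α (i + 1) ^ 2 - α (i + 2) ^ 2) :=
                Finset.sum_le_sum fun i _ => hineq i
            _ = α 1 ^ 2 - α (n + 1) ^ 2 := htel
            _ ≤ 1 := by nlinarith [hpos (n + 1) (by omega), h1]
        have hsum2 : ∑ i ∈ Finset.range n, (1 / ((i : ℝ) + 2)) ≤ 1 / c := by
          rw [← Finset.mul_sum] at hsum1
          rw [le_div_iff₀ hc0]
          linarith [hsum1]
        rw [Finset.sum_range_succ']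
        have hcongr : ∑ k ∈ Finset.range n, (1 / ((↑(k + 1) : ℝ) + 1)) =
            ∑ k ∈ Finset.range n, (1 / ((k : ℝ) + 2)) :=
          Finset.sum_congr rfl fun i _ => by push_cast; ring_nf
        rw [hcongr]
        simp only [Nat.cast_zero, zero_add, div_one]
        linarith
    obtain ⟨n, hn⟩ :=
      (Real.tendsto_sum_range_one_div_nat_succ_atTop.eventually_gt_atTop (1 + 1 / c)).exists
    exact absurd (hbound n) (not_le.mpr (by exact_mod_cast hn))
  rw [Metric.tendsto_atTop]
  intro ε hε
  obtain ⟨k, hk1, hk⟩ := key ε hε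
  refine ⟨k, fun n hn => ?_⟩
  have h1' := hpos n (le_trans hk1 hn)
  have h2' := hanti k n hk1 hn
  rw [Real.dist_eq, sub_zero, abs_of_pos h1']
  linarith
end

section
/- Let k₀ ≥ 1 be an integer and f(k₀) a real with 0 < f(k₀) < 1/(e²·k₀), and define f(k₀+n+1) = (k₀+n+1)·f(k₀+n)² for n ≥ 0. Then for all n ≥ 0, exp(−c₁·2ⁿ) ≤ f(k₀+n) ≤ exp(−c₂·2ⁿ), where c₁ = −log f(k₀) and c₂ = −log(f(k₀)·k₀·e²), and both c₁, c₂ are positive. -/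
/-- Let k₀ ≥ 1 and 0 < f(k₀) < 1/(e² k₀), with f(k) = k f(k−1)² for k > k₀. Then
for all n ≥ 0: exp(−c₁ 2ⁿ) ≤ f(k₀+n) ≤ exp(−c₂ 2ⁿ), where c₁ = −log f(k₀) and
c₂ = −log(f(k₀) k₀ e²) are both positive. -/
theorem stmt_15 (k₀ : ℕ) (hk₀ : 1 ≤ k₀) (f : ℕ → ℝ)
    (hpos : 0 < f k₀)
    (hsmall : f k₀ < 1 / (Real.exp 2 * k₀))
    (hf : ∀ n : ℕ, f (k₀ + n + 1) = ((k₀ + n + 1 : ℕ) : ℝ) * (f (k₀ + n)) ^ 2) :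
    0 < -Real.log (f k₀) ∧
    0 < -Real.log (f k₀ * k₀ * Real.exp 2) ∧
    ∀ n : ℕ,
      Real.exp (-(-Real.log (f k₀)) * 2 ^ n) ≤ f (k₀ + n) ∧
      f (k₀ + n) ≤ Real.exp (-(-Real.log (f k₀ * k₀ * Real.exp 2)) * 2 ^ n) := by
  have hk0' : (1 : ℝ) ≤ (k₀ : ℝ) := by exact_mod_cast hk₀
  have hk0pos : (0 : ℝ) < (k₀ : ℝ) := lt_of_lt_of_le one_pos hk0'
  have he1 : (1 : ℝ) < Real.exp 2 := by nlinarith [Real.add_one_le_exp (2:ℝ)]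
  have hepos : (0 : ℝ) < Real.exp 2 := Real.exp_pos 2
  have hprod : (0 : ℝ) < Real.exp 2 * (k₀ : ℝ) := by positivity
  have hsmall' : f k₀ * (Real.exp 2 * (k₀ : ℝ)) < 1 := by
    rw [lt_div_iff₀ hprod] at hsmall; linarith
  have hfk1 : f k₀ < 1 := by nlinarith
  have hfk2 : f k₀ * (k₀ : ℝ) * Real.exp 2 < 1 := by nlinarith
  have hc1 : 0 < -Real.log (f k₀) := by
    have := Real.log_neg hpos hfk1; linarith
  have hc2 : 0 < -Real.log (f k₀ * (k₀ : ℝ) * Real.exp 2) := by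
    have := Real.log_neg (by positivity) hfk2; linarith
  set a := Real.log (f k₀) with ha
  set b := Real.log (f k₀ * (k₀ : ℝ) * Real.exp 2) with hb
  have hbeq : b = a + Real.log (k₀ : ℝ) + 2 := by
    rw [hb, Real.log_mul (by positivity) (ne_of_gt hepos),
      Real.log_mul (ne_of_gt hpos) (ne_of_gt hk0pos), Real.log_exp]
  have hlk : 0 ≤ Real.log (k₀ : ℝ) := Real.log_nonneg hk0'
  -- lower bound
  have hlow : ∀ n : ℕ, Real.exp (a * 2 ^ n) ≤ f (k₀ + n) := by
    intro n
    induction n with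
    | zero => simp [ha, Real.exp_log hpos]
    | succ n ih =>
      have hfp : (0 : ℝ) < f (k₀ + n) := lt_of_lt_of_le (Real.exp_pos _) ih
      have hk1 : (1 : ℝ) ≤ ((k₀ + n + 1 : ℕ) : ℝ) := by
        have : (1 : ℕ) ≤ k₀ + n + 1 := by omega
        exact_mod_cast this
      rw [show k₀ + (n+1) = k₀ + n + 1 from rfl, hf n]
      have h2 : Real.exp (a * 2 ^ (n + 1)) = Real.exp (a * 2 ^ n) ^ 2 := by
        rw [← Real.exp_nat_mul]; ring_nf
      rw [h2]
      nlinarith [Real.exp_pos (a * 2 ^ n)]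
  -- strengthened upper bound
  have hup : ∀ n : ℕ, f (k₀ + n) ≤
      Real.exp (2 ^ n * b - (Real.log (k₀ : ℝ) + n + 2)) := by
    intro n
    induction n with
    | zero =>
      have : (2:ℝ) ^ (0:ℕ) * b - (Real.log (k₀ : ℝ) + (0:ℕ) + 2) = a := by
        rw [hbeq]; push_cast; ring
      rw [this, Real.exp_log hpos]
      simp
    | succ n ih =>
      have hfp : (0 : ℝ) < f (k₀ + n) := lt_of_lt_of_le (Real.exp_pos _) (hlow n)
      rw [show k₀ + (n+1) = k₀ + n + 1 from rfl, hf n]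
      have hsq : f (k₀ + n) ^ 2 ≤
          Real.exp (2 ^ n * b - (Real.log (k₀ : ℝ) + n + 2)) ^ 2 := by
        nlinarith
      have hkc : ((k₀ + n + 1 : ℕ) : ℝ) = (k₀ : ℝ) + n + 1 := by push_cast; ring
      have hkn : ((k₀ + n + 1 : ℕ) : ℝ) ≤ Real.exp (Real.log (k₀ : ℝ) + n + 1) := by
        rw [hkc, show Real.log (k₀:ℝ) + (n:ℝ) + 1 = Real.log (k₀:ℝ) + ((n:ℝ)+1) from by ring, Real.exp_add, Real.exp_log hk0pos]
        have hexp : (n : ℝ) + 1 + 1 ≤ Real.exp ((n : ℝ) + 1) := by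
          have := Real.add_one_le_exp ((n : ℝ) + 1); linarith
        nlinarith [Real.exp_pos ((n : ℝ) + 1)]
      calc ((k₀ + n + 1 : ℕ) : ℝ) * f (k₀ + n) ^ 2
          ≤ Real.exp (Real.log (k₀ : ℝ) + n + 1) *
            Real.exp (2 ^ n * b - (Real.log (k₀ : ℝ) + n + 2)) ^ 2 := by
            have h0 : (0:ℝ) ≤ f (k₀ + n) ^ 2 := sq_nonneg _
            have hk0le : (0:ℝ) ≤ ((k₀ + n + 1 : ℕ) : ℝ) := by positivity
            nlinarith [Real.exp_pos (Real.log (k₀ : ℝ) + n + 1), sq_nonneg (Real.exp (2 ^ n * b - (Real.log (k₀ : ℝ) + n + 2)))]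
        _ = Real.exp (2 ^ (n+1) * b - (Real.log (k₀ : ℝ) + ((n+1 : ℕ) : ℝ) + 2)) := by
            rw [← Real.exp_nat_mul, ← Real.exp_add]
            congr 1
            push_cast
            ring
  refine ⟨hc1, hc2, fun n => ⟨?_, ?_⟩⟩
  · have := hlow n
    have heq : -(-a) * 2 ^ n = a * 2 ^ n := by ring
    rw [heq]; exact this
  · have := hup n
    refine this.trans (Real.exp_le_exp.mpr ?_)
    have hn : (0:ℝ) ≤ (n:ℝ) := Nat.cast_nonneg n
    nlinarith
end
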